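/- Let 𝔤 = 𝔤_{3.6} ⊕ 𝔤₁ (sl(2,ℝ)-type) be the 4-dimensional real Lie algebra with basis e₁,...,e₄ and nonzero brackets [e₂,e₃] = e₁, [e₃,e₁] = e₂, [e₁,e₂] = −e₃. A 4×4 real matrix R equals η·Id + D for some η ∈ ℝ and some derivation D of 𝔤 if and only if Rᵢ₄ = R₄ᵢ = 0 for i = 1,2,3, R₂₁ = −R₁₂, R₃₁ = R₁₃, R₃₂ = R₂₃, and R₁₁ = R₂₂ = R₃₃. In this case η = R₁₁. -/
import Mathlib


open Matrix

/-- The Lie bracket of the Lie algebra, in coordinates. -/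
def br (x y : Fin 4 → ℝ) : Fin 4 → ℝ :=
  ![(x 1 * y 2 - x 2 * y 1), (x 2 * y 0 - x 0 * y 2), -(x 0 * y 1 - x 1 * y 0), (0:ℝ)]

/-- `D` (acting via `mulVec`) is a derivation of the bracket. -/
def IsDer (D : Matrix (Fin 4) (Fin 4) ℝ) : Prop :=
  ∀ x y : Fin 4 → ℝ, D.mulVec (br x y) = br (D.mulVec x) y + br x (D.mulVec y)

lemma der_entries (D : Matrix (Fin 4) (Fin 4) ℝ) (hD : IsDer D) :
    D 0 3 = 0 ∧ D 1 3 = 0 ∧ D 2 3 = 0 ∧ D 3 0 = 0 ∧ D 3 1 = 0 ∧ D 3 2 = 0 ∧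
    D 1 0 = -D 0 1 ∧ D 2 0 = D 0 2 ∧ D 2 1 = D 1 2 ∧
    D 0 0 = 0 ∧ D 1 1 = 0 ∧ D 2 2 = 0 := by
  have h1 := congrFun (hD ![0,1,0,0] ![0,0,1,0])
  have h2 := congrFun (hD ![0,0,1,0] ![1,0,0,0])
  have h3 := congrFun (hD ![1,0,0,0] ![0,1,0,0])
  have h4 := congrFun (hD ![0,1,0,0] ![0,0,0,1])
  have h5 := congrFun (hD ![1,0,0,0] ![0,0,0,1])
  have h10 := h1 0; have h11 := h1 1; have h12 := h1 2; have h13 := h1 3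
  have h20 := h2 0; have h21 := h2 1; have h22 := h2 2; have h23 := h2 3
  have h30 := h3 0; have h31 := h3 1; have h32 := h3 2; have h33 := h3 3
  have h40 := h4 0; have h42 := h4 2
  have h51 := h5 1; have h52 := h5 2
  simp [br, Matrix.mulVec, dotProduct, Fin.sum_univ_four] at h10 h11 h12 h13 h20 h21 h22 h23 h30 h31 h32 h33 h40 h42 h51 h52
  refine ⟨?_, ?_, ?_, ?_, ?_, ?_, ?_, ?_, ?_, ?_, ?_, ?_⟩ <;> linarith

theorem stmt_9 (R : Matrix (Fin 4) (Fin 4) ℝ) :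
    ((∃ (η : ℝ) (D : Matrix (Fin 4) (Fin 4) ℝ), IsDer D ∧
        R = η • (1 : Matrix (Fin 4) (Fin 4) ℝ) + D) ↔
      (R 0 3 = 0 ∧ R 1 3 = 0 ∧ R 2 3 = 0 ∧ R 3 0 = 0 ∧ R 3 1 = 0 ∧ R 3 2 = 0 ∧ R 1 0 = -R 0 1 ∧ R 2 0 = R 0 2 ∧ R 2 1 = R 1 2 ∧ R 0 0 = R 1 1 ∧ R 1 1 = R 2 2)) ∧
    (∀ (η : ℝ) (D : Matrix (Fin 4) (Fin 4) ℝ), IsDer D →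
      R = η • (1 : Matrix (Fin 4) (Fin 4) ℝ) + D → η = R 0 0) := by
  constructor
  · constructor
    · rintro ⟨η, D, hD, rfl⟩
      obtain ⟨d1, d2, d3, d4, d5, d6, d7, d8, d9, d10, d11, d12⟩ := der_entries D hD
      simp [Matrix.add_apply, Matrix.smul_apply, Matrix.one_apply]
      refine ⟨d1, d2, d3, d4, d5, d6, ?_, ?_, ?_, ?_, ?_⟩ <;> linarith
    · rintro ⟨h1, h2, h3, h4, h5, h6, h7, h8, h9, h10, h11⟩
      refine ⟨R 0 0, R - R 0 0 • 1, ?_, by abel⟩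
      have e1 : R 1 1 = R 0 0 := h10.symm
      have e2 : R 2 2 = R 0 0 := h11.symm.trans h10.symm
      intro x y
      funext i
      fin_cases i <;>
        simp [br, Matrix.mulVec, dotProduct, Fin.sum_univ_four, Matrix.sub_apply,
          Matrix.smul_apply, Matrix.one_apply, h1, h2, h3, h4, h5, h6, h7, h8, h9, e1, e2] <;>
        ring
  · rintro η D hD rfl
    obtain ⟨-, -, -, -, -, -, -, -, -, d10, -, -⟩ := der_entries D hD
    simp [Matrix.add_apply, Matrix.smul_apply, Matrix.one_apply, d10]
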